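/- arXiv:2010.13529 — 2 statements merged into one kernel-verified Lean document; each statement's English description precedes it below -/
import Mathlib

section
/- Suppose a function L : ℕ → ℝ satisfies α₁·c_k ≤ L(k) ≤ α₂·c_k for all k, where c_k ≥ 0, α₁ ≥ 0, α₂ > 0, and L(k+1) − L(k) ≤ −β·c_k + δ_k with 0 < β < α₂ and δ_k ≥ 0 non-increasing. Then with σ = (α₂ − β)/α₂ ∈ (0,1), for all k ≥ 0: c_k ≤ (α₂/α₁) · σ^k · c_0 + (1/α₁)·∑_{ι=0}^{k−1} σ^{k−ι−1} δ_ι, provided α₁ > 0. -/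
theorem lyapunov_exponential_bound (L c δ : ℕ → ℝ) (α₁ α₂ β : ℝ)
    (hc : ∀ k, 0 ≤ c k) (hα₁ : 0 < α₁) (hα₂ : 0 < α₂)
    (hβ0 : 0 < β) (hβα : β < α₂)
    (hsand : ∀ k, α₁ * c k ≤ L k ∧ L k ≤ α₂ * c k)
    (hδ : ∀ k, 0 ≤ δ k) (hδmono : ∀ k, δ (k + 1) ≤ δ k)
    (hdec : ∀ k, L (k + 1) - L k ≤ -β * c k + δ k) :
    0 < (α₂ - β) / α₂ ∧ (α₂ - β) / α₂ < 1 ∧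
      ∀ k : ℕ, c k ≤ (α₂ / α₁) * ((α₂ - β) / α₂) ^ k * c 0 +
        (1 / α₁) * ∑ ι ∈ Finset.range k, ((α₂ - β) / α₂) ^ (k - ι - 1) * δ ι := by
  set σ : ℝ := (α₂ - β) / α₂ with hσ
  have hσ0 : 0 < σ := div_pos (by linarith) hα₂
  have hσ1 : σ < 1 := by
    rw [hσ, div_lt_one hα₂]; linarith
  refine ⟨hσ0, hσ1, ?_⟩
  -- key recursion: L (k+1) ≤ σ * L k + δ k
  have hrec : ∀ k, L (k + 1) ≤ σ * L k + δ k := by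
    intro k
    have h1 := hdec k
    have h2 := (hsand k).2
    have hck : -β * c k ≤ -(β / α₂) * L k := by
      have : (β / α₂) * L k ≤ (β / α₂) * (α₂ * c k) := by
        apply mul_le_mul_of_nonneg_left h2 (le_of_lt (div_pos hβ0 hα₂))
      have heq : (β / α₂) * (α₂ * c k) = β * c k := by
        field_simp
      nlinarith
    have : σ * L k = L k - (β / α₂) * L k := by
      rw [hσ]; field_simp
    linarith
  -- induction: L k ≤ σ^k * L 0 + ∑ σ^(k-ι-1) δ ι
  have hL : ∀ k, L k ≤ σ ^ k * L 0 + ∑ ι ∈ Finset.range k, σ ^ (k - ι - 1) * δ ι := by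
    intro k
    induction k with
    | zero => simp
    | succ n ih =>
      have step := hrec n
      have hmul : σ * L n ≤ σ * (σ ^ n * L 0 + ∑ ι ∈ Finset.range n, σ ^ (n - ι - 1) * δ ι) :=
        mul_le_mul_of_nonneg_left ih hσ0.le
      have hsum : σ * ∑ ι ∈ Finset.range n, σ ^ (n - ι - 1) * δ ι + δ n =
          ∑ ι ∈ Finset.range (n + 1), σ ^ (n + 1 - ι - 1) * δ ι := by
        rw [Finset.sum_range_succ, Finset.mul_sum]
        have : ∀ ι ∈ Finset.range n, σ * (σ ^ (n - ι - 1) * δ ι) = σ ^ (n + 1 - ι - 1) * δ ι := by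
          intro ι hι
          have hι' : ι < n := Finset.mem_range.mp hι
          have : n + 1 - ι - 1 = (n - ι - 1) + 1 := by omega
          rw [this, pow_succ]; ring
        rw [Finset.sum_congr rfl this]
        simp
      calc L (n + 1) ≤ σ * L n + δ n := step
        _ ≤ σ * (σ ^ n * L 0 + ∑ ι ∈ Finset.range n, σ ^ (n - ι - 1) * δ ι) + δ n := by linarith
        _ = σ ^ (n + 1) * L 0 + (σ * ∑ ι ∈ Finset.range n, σ ^ (n - ι - 1) * δ ι + δ n) := by
            ring
        _ = σ ^ (n + 1) * L 0 + ∑ ι ∈ Finset.range (n + 1), σ ^ (n + 1 - ι - 1) * δ ι := by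
            rw [hsum]
  intro k
  have h1 := (hsand k).1
  have h2 := (hsand 0).2
  have hLk := hL k
  have hpow : 0 ≤ σ ^ k := pow_nonneg hσ0.le k
  have hL0 : σ ^ k * L 0 ≤ σ ^ k * (α₂ * c 0) := mul_le_mul_of_nonneg_left h2 hpow
  have : α₁ * c k ≤ σ ^ k * (α₂ * c 0) + ∑ ι ∈ Finset.range k, σ ^ (k - ι - 1) * δ ι := by
    linarith
  have hfin : c k ≤ (σ ^ k * (α₂ * c 0) + ∑ ι ∈ Finset.range k, σ ^ (k - ι - 1) * δ ι) / α₁ := by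
    rw [le_div_iff₀ hα₁]
    nlinarith
  calc c k ≤ _ := hfin
    _ = (α₂ / α₁) * σ ^ k * c 0 + (1 / α₁) * ∑ ι ∈ Finset.range k, σ ^ (k - ι - 1) * δ ι := by
        field_simp
end

section
/- Let S, A be finite sets, γ ∈ [0,1), c : S × A → ℝ bounded, P a transition kernel, and π_old, π_new policies with value functions defined via the soft Bellman equations. If for all s ∈ S: E_{a∼π_new}[α·ln π_new(a|s) + Q_{π_old}(s,a)] ≤ E_{a∼π_old}[α·ln π_old(a|s) + Q_{π_old}(s,a)], then Q_{π_new}(s,a) ≤ Q_{π_old}(s,a) for all (s,a). -/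
theorem policy_improvement {S A : Type*} [Fintype S] [Fintype A]
    (c : S → A → ℝ) (γ : ℝ) (hγ0 : 0 ≤ γ) (hγ1 : γ < 1)
    (C : ℝ) (hc : ∀ s a, |c s a| ≤ C) (α : ℝ) (hα : 0 ≤ α)
    (P : S → A → S → ℝ) (hPnn : ∀ s a s', 0 ≤ P s a s')
    (hPsum : ∀ s a, ∑ s', P s a s' = 1)
    (πold πnew : S → A → ℝ)
    (hπoldnn : ∀ s a, 0 ≤ πold s a) (hπoldsum : ∀ s, ∑ a, πold s a = 1)
    (hπnewnn : ∀ s a, 0 ≤ πnew s a) (hπnewsum : ∀ s, ∑ a, πnew s a = 1)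
    (Qold Qnew : S → A → ℝ) (Vold Vnew : S → ℝ)
    (hVold : ∀ s, Vold s = ∑ a, πold s a * (Qold s a + α * Real.log (πold s a)))
    (hQold : ∀ s a, Qold s a = c s a + γ * ∑ s', P s a s' * Vold s')
    (hVnew : ∀ s, Vnew s = ∑ a, πnew s a * (Qnew s a + α * Real.log (πnew s a)))
    (hQnew : ∀ s a, Qnew s a = c s a + γ * ∑ s', P s a s' * Vnew s')
    (himp : ∀ s, ∑ a, πnew s a * (α * Real.log (πnew s a) + Qold s a) ≤
                 ∑ a, πold s a * (α * Real.log (πold s a) + Qold s a)) :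
    ∀ s a, Qnew s a ≤ Qold s a := by
  intro s₀ a₀
  obtain ⟨⟨s, a⟩, -, hmax⟩ := Finset.exists_max_image (Finset.univ : Finset (S × A))
    (fun p => Qnew p.1 p.2 - Qold p.1 p.2) ⟨(s₀, a₀), Finset.mem_univ _⟩
  set M := Qnew s a - Qold s a with hMdef
  have hM : ∀ s' a', Qnew s' a' - Qold s' a' ≤ M := fun s' a' =>
    hmax (s', a') (Finset.mem_univ _)
  -- pointwise bound on value difference
  have hV : ∀ s', Vnew s' - Vold s' ≤ M := by
    intro t
    have h1 : ∑ b, πnew t b * (α * Real.log (πnew t b) + Qold t b) ≤ Vold t := by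
      rw [hVold]
      refine le_trans (himp t) (le_of_eq ?_)
      apply Finset.sum_congr rfl
      intro b _; ring
    have h2 : Vnew t - ∑ b, πnew t b * (α * Real.log (πnew t b) + Qold t b)
        = ∑ b, πnew t b * (Qnew t b - Qold t b) := by
      rw [hVnew, ← Finset.sum_sub_distrib]
      apply Finset.sum_congr rfl
      intro b _; ring
    have h3 : ∑ b, πnew t b * (Qnew t b - Qold t b) ≤ ∑ b, πnew t b * M := by
      apply Finset.sum_le_sum
      intro b _
      exact mul_le_mul_of_nonneg_left (hM t b) (hπnewnn t b)
    have h4 : ∑ b, πnew t b * M = M := by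
      rw [← Finset.sum_mul, hπnewsum, one_mul]
    linarith
  -- M ≤ γ * M
  have key : M ≤ γ * M := by
    have h5 : M = γ * ∑ s', P s a s' * (Vnew s' - Vold s') := by
      rw [hMdef, hQnew, hQold]
      have : ∑ s', P s a s' * (Vnew s' - Vold s')
          = (∑ s', P s a s' * Vnew s') - ∑ s', P s a s' * Vold s' := by
        rw [← Finset.sum_sub_distrib]
        exact Finset.sum_congr rfl (fun _ _ => by ring)
      rw [this]; ring
    have h6 : ∑ s', P s a s' * (Vnew s' - Vold s') ≤ ∑ s', P s a s' * M := by
      apply Finset.sum_le_sum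
      intro s' _
      exact mul_le_mul_of_nonneg_left (hV s') (hPnn s a s')
    have h7 : ∑ s', P s a s' * M = M := by
      rw [← Finset.sum_mul, hPsum, one_mul]
    calc M = γ * ∑ s', P s a s' * (Vnew s' - Vold s') := h5
    _ ≤ γ * ∑ s', P s a s' * M := by
        exact mul_le_mul_of_nonneg_left h6 hγ0
    _ = γ * M := by rw [h7]
  have hM0 : M ≤ 0 := by nlinarith
  have := hM s₀ a₀
  linarith
end
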